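/- Normalized-direction update for damped preconditioned descent: for θ ∈ ℝ^n \ {0} with ρ = ‖θ‖, θ̂ = θ/ρ, a curvature map satisfying C(θ) = ρ⁻² C(θ̂), damping λ > 0, and gradient satisfying ∇L(θ) = ρ⁻¹ ∇L(θ̂) (scale invariance), the update θ⁺ = θ − η(C(θ) + λI)⁻¹∇L(θ) yields θ⁺/‖θ⁺‖ = θ̂ − η (I − θ̂θ̂ᵀ)(C(θ̂) + ρ²λ I)⁻¹ ∇L(θ̂) + O(η²). -/

import Mathlib

open scoped RealInnerProductSpace ContDiff
open Asymptotics Matrix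

/-- First-order Taylor remainder bound for an analytic function. -/
lemma taylor_one_isBigO {F : Type*} [NormedAddCommGroup F] [NormedSpace ℝ F]
    {f : ℝ → F} {d : F} (hf : AnalyticAt ℝ f 0) (hd : HasDerivAt f d 0) :
    (fun η : ℝ => f η - (f 0 + η • d)) =O[nhds 0] fun η : ℝ => η ^ 2 := by
  obtain ⟨p, hp⟩ := hf
  have h2 := hp.isBigO_sub_partialSum_pow 2
  have hd1 : d = p 1 fun _ => (1:ℝ) := hd.unique hp.hasDerivAt
  refine (h2.congr (fun y => ?_) (fun y => by rw [← sq_abs]; simp)).mono le_rfl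
  simp only [zero_add, FormalMultilinearSeries.partialSum, Finset.sum_range_succ,
    Finset.sum_range_zero, zero_add]
  rw [hp.coeff_zero, hd1]
  have : (p 1 fun _ => y) = y • p 1 fun _ => (1:ℝ) := by
    simpa using p.apply_eq_pow_smul_coeff (n := 1) (z := y)
  rw [this]

lemma posdef_shift {n : ℕ} {Ch : Matrix (Fin n) (Fin n) ℝ} (hCh : Ch.PosSemidef)
    {c : ℝ} (hc : 0 < c) : (Ch + c • (1 : Matrix (Fin n) (Fin n) ℝ)).PosDef := by
  constructor
  · exact hCh.isHermitian.add (by simp [Matrix.IsHermitian, Matrix.conjTranspose_smul])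
  · exact (Matrix.PosDef.posSemidef_add hCh (Matrix.PosDef.one.smul hc)).2

lemma matrix_scale {n : ℕ} {Ch : Matrix (Fin n) (Fin n) ℝ} (hCh : Ch.PosSemidef)
    {lam ρ : ℝ} (hlam : 0 < lam) (hρ : 0 < ρ) (ghat : Fin n → ℝ) :
    ((ρ ^ 2)⁻¹ • Ch + lam • (1 : Matrix (Fin n) (Fin n) ℝ))⁻¹.mulVec (ρ⁻¹ • ghat)
      = ρ • (Ch + (ρ ^ 2 * lam) • (1 : Matrix (Fin n) (Fin n) ℝ))⁻¹.mulVec ghat := by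
  have hρ2 : (ρ ^ 2) ≠ 0 := by positivity
  have hA : (Ch + (ρ ^ 2 * lam) • (1 : Matrix (Fin n) (Fin n) ℝ)).PosDef :=
    posdef_shift hCh (by positivity)
  have hB : (ρ ^ 2)⁻¹ • Ch + lam • (1 : Matrix (Fin n) (Fin n) ℝ)
      = (ρ ^ 2)⁻¹ • (Ch + (ρ ^ 2 * lam) • (1 : Matrix (Fin n) (Fin n) ℝ)) := by
    rw [smul_add, smul_smul]
    field_simp
  rw [hB]
  haveI : Invertible ((ρ ^ 2)⁻¹ : ℝ) := invertibleOfNonzero (by positivity)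
  have hinv := Matrix.inv_smul (A := Ch + (ρ ^ 2 * lam) • (1 : Matrix (Fin n) (Fin n) ℝ))
    ((ρ ^ 2)⁻¹ : ℝ) (Matrix.isUnit_iff_isUnit_det _ |>.mp hA.isUnit)
  rw [invOf_eq_right_inv (mul_inv_cancel₀ (by positivity : ((ρ ^ 2)⁻¹ : ℝ) ≠ 0))] at hinv
  rw [hinv, Matrix.smul_mulVec, Matrix.mulVec_smul, smul_smul]
  congr 1
  field_simp

/-- Normalized-direction update for damped preconditioned descent. With `ρ = ‖θ‖`,
`θ̂ = θ/ρ`, curvature `C(θ) = ρ⁻² C(θ̂)` and scale-invariant gradient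
`∇L(θ) = ρ⁻¹ ∇L(θ̂)`, the damped update `θ⁺ = θ − η(C(θ) + λI)⁻¹∇L(θ)` satisfies
`θ⁺/‖θ⁺‖ = θ̂ − η (I − θ̂θ̂ᵀ)(C(θ̂) + ρ²λ I)⁻¹ ∇L(θ̂) + O(η²)`. -/
theorem damped_preconditioned_normalized_update {n : ℕ}
    (θ : EuclideanSpace ℝ (Fin n)) (hθ : θ ≠ 0)
    (Ch : Matrix (Fin n) (Fin n) ℝ) (hCh : Ch.PosSemidef)
    (lam : ℝ) (hlam : 0 < lam) (ghat : Fin n → ℝ) :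
    (fun η : ℝ =>
        (fun θplus : EuclideanSpace ℝ (Fin n) => ‖θplus‖⁻¹ • θplus)
          (θ - η • (EuclideanSpace.equiv (Fin n) ℝ).symm
            (((‖θ‖ ^ 2)⁻¹ • Ch + lam • (1 : Matrix (Fin n) (Fin n) ℝ))⁻¹.mulVec
              (‖θ‖⁻¹ • ghat))) -
        (‖θ‖⁻¹ • θ - η •
          ((fun v : EuclideanSpace ℝ (Fin n) => v - ⟪‖θ‖⁻¹ • θ, v⟫ • (‖θ‖⁻¹ • θ))
            ((EuclideanSpace.equiv (Fin n) ℝ).symm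
              ((Ch + (‖θ‖ ^ 2 * lam) • (1 : Matrix (Fin n) (Fin n) ℝ))⁻¹.mulVec ghat)))))
      =O[nhds 0] fun η : ℝ => η ^ 2 := by
  have hρ : (0:ℝ) < ‖θ‖ := norm_pos_iff.mpr hθ
  have hρ0 : ‖θ‖ ≠ 0 := hρ.ne'
  set w : EuclideanSpace ℝ (Fin n) :=
    (EuclideanSpace.equiv (Fin n) ℝ).symm
      ((Ch + (‖θ‖ ^ 2 * lam) • (1 : Matrix (Fin n) (Fin n) ℝ))⁻¹.mulVec ghat) with hw
  have hveq : (EuclideanSpace.equiv (Fin n) ℝ).symm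
      (((‖θ‖ ^ 2)⁻¹ • Ch + lam • (1 : Matrix (Fin n) (Fin n) ℝ))⁻¹.mulVec (‖θ‖⁻¹ • ghat))
      = ‖θ‖ • w := by
    rw [matrix_scale hCh hlam hρ ghat]
    exact ((EuclideanSpace.equiv (Fin n) ℝ).symm : (Fin n → ℝ) ≃L[ℝ] EuclideanSpace ℝ (Fin n)).map_smul _ _
  set v : EuclideanSpace ℝ (Fin n) := ‖θ‖ • w with hv
  set F : ℝ → EuclideanSpace ℝ (Fin n) := fun η => θ - η • v with hF
  set f : ℝ → EuclideanSpace ℝ (Fin n) := fun η => ‖F η‖⁻¹ • F η with hf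
  have hF0 : F 0 = θ := by simp [hF]
  -- analyticity
  have hFc : ContDiffAt ℝ ω F 0 :=
    contDiffAt_const.sub (contDiffAt_id.smul contDiffAt_const)
  have hFn : ContDiffAt ℝ ω (fun η => ‖F η‖) 0 := hFc.norm ℝ (by rw [hF0]; exact hθ)
  have hfc : ContDiffAt ℝ ω f 0 :=
    (hFn.inv (by rw [hF0]; exact hρ0)).smul hFc
  have hfa : AnalyticAt ℝ f 0 := hfc.analyticAt
  -- derivative
  have hdF : HasDerivAt F (-v) 0 := by
    simpa using ((hasDerivAt_id (0:ℝ)).smul_const v).const_sub θ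
  have hsq : HasDerivAt (fun η => ‖F η‖ ^ 2) (2 * ⟪F 0, -v⟫) 0 := hdF.norm_sq
  have hFsq0 : ‖F 0‖ ^ 2 ≠ 0 := by rw [hF0]; positivity
  have hsqrt := hsq.sqrt hFsq0
  have heq : (fun η => Real.sqrt (‖F η‖ ^ 2)) = fun η => ‖F η‖ :=
    funext fun η => Real.sqrt_sq (norm_nonneg _)
  rw [heq] at hsqrt
  have hsqrt' : HasDerivAt (fun η => ‖F η‖)
      (2 * ⟪F 0, -v⟫ / (2 * Real.sqrt (‖F 0‖ ^ 2))) 0 := hsqrt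
  have hNne : ‖F 0‖ ≠ 0 := by rw [hF0]; exact hρ0
  have hinv := hsqrt'.inv hNne
  have hfd := hinv.smul hdF
  set D : EuclideanSpace ℝ (Fin n) := -(w - ⟪‖θ‖⁻¹ • θ, w⟫ • (‖θ‖⁻¹ • θ)) with hD
  have hDeq : ‖F 0‖⁻¹ • -v +
      (-(2 * ⟪F 0, -v⟫ / (2 * Real.sqrt (‖F 0‖ ^ 2))) / ‖F 0‖ ^ 2) • F 0 = D := by
    rw [hF0, hD, hv]
    rw [Real.sqrt_sq (norm_nonneg θ)]
    have h1 : ⟪θ, -(‖θ‖ • w)⟫ = -(‖θ‖ * ⟪θ, w⟫) := by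
      rw [inner_neg_right, real_inner_smul_right]
    rw [h1]
    have h2 : ⟪‖θ‖⁻¹ • θ, w⟫ = ‖θ‖⁻¹ * ⟪θ, w⟫ := real_inner_smul_left θ w _
    rw [h2]
    rw [smul_neg, smul_smul, inv_mul_cancel₀ hρ0, one_smul]
    rw [neg_sub, smul_smul]
    rw [sub_eq_add_neg, add_comm]
    congr 2
    field_simp
  rw [show (fun η => ‖F η‖)⁻¹ 0 = ‖F 0‖⁻¹ from rfl, hDeq] at hfd
  -- main estimate
  have hO := taylor_one_isBigO hfa hfd
  have hf0 : f 0 = ‖θ‖⁻¹ • θ := by rw [hf]; simp [hF0]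
  have key : ∀ η : ℝ, ‖θ - η • v‖⁻¹ • (θ - η • v) -
      (‖θ‖⁻¹ • θ - η • (w - ⟪‖θ‖⁻¹ • θ, w⟫ • (‖θ‖⁻¹ • θ)))
      = f η - (f 0 + η • D) := by
    intro η
    rw [hf0]
    show ‖θ - η • v‖⁻¹ • (θ - η • v) - _ =
      ‖θ - η • v‖⁻¹ • (θ - η • v) - (‖θ‖⁻¹ • θ + η • D)
    rw [hD, smul_neg, ← sub_eq_add_neg]
  refine hO.congr' (Filter.Eventually.of_forall fun η => ?_)
    (Filter.Eventually.of_forall fun _ => rfl)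
  simp only [hveq]
  exact (key η).symm
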